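/- The group G₃₅₁ acts freely on the set of all 17-element subsets of F₂₇: if g ∈ G₃₅₁ and W is a finset of F₂₇ with exactly 17 elements such that the image of W under g equals W, then g is the identity permutation. -/

import Mathlib

/-- `F₂₇`, a finite field with 27 elements. -/
abbrev F27 : Type := GaloisField 3 3

/-- `a` is a nonzero square in `F₂₇`. -/
def IsNonzeroSquare (a : F27) : Prop := a ≠ 0 ∧ ∃ c : F27, a = c ^ 2

/-- The set of affine permutations `x ↦ a·x + b` with `a` a nonzero square. -/
def affineSet : Set (Equiv.Perm F27) :=
  { g | ∃ a b : F27, IsNonzeroSquare a ∧ ∀ x : F27, g x = a * x + b }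

open MulAction in
/-- Key counting lemma: if `g ^ p = 1` and `W` is `g`-invariant, then
`|W|` is congruent mod `p` to the number of fixed points of `g` in `W`. -/
lemma key_count (p : ℕ) (hp : p.Prime) (g : Equiv.Perm F27) (W : Finset F27)
    (hmem : ∀ x, x ∈ W ↔ g x ∈ W) (hgp : g ^ p = 1) :
    W.card ≡ Nat.card {x : F27 // x ∈ W ∧ g x = x} [MOD p] := by
  classical
  haveI : Fact p.Prime := ⟨hp⟩
  set e : Equiv.Perm {x // x ∈ W} := g.subtypePerm (fun x => (hmem x).symm) with he
  have hval : ∀ (n : ℕ) (x : {x // x ∈ W}), ((e ^ n) x : F27) = (g ^ n) (x : F27) := by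
    intro n
    induction n with
    | zero => intro x; simp
    | succ n ih =>
      intro x
      rw [pow_succ, pow_succ, Equiv.Perm.mul_apply, Equiv.Perm.mul_apply, ih]
      rfl
  have hep : e ^ p = 1 := by
    ext x
    have := hval p x
    rw [hgp] at this
    simpa using this
  have hPG : IsPGroup p (Subgroup.zpowers e) := by
    rintro ⟨h, hh⟩
    refine ⟨1, ?_⟩
    obtain ⟨k, hk⟩ := Subgroup.mem_zpowers_iff.mp hh
    ext1
    push_cast
    rw [pow_one, ← hk, ← zpow_natCast, ← zpow_mul, mul_comm, zpow_mul, zpow_natCast, hep,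
      one_zpow]
  have hcong := hPG.card_modEq_card_fixedPoints {x // x ∈ W}
  have h1 : Nat.card {x // x ∈ W} = W.card := by
    simp [Nat.card_eq_fintype_card, Fintype.card_coe]
  have key : ∀ x : {x // x ∈ W},
      x ∈ fixedPoints (Subgroup.zpowers e) {x // x ∈ W} ↔ g x.1 = x.1 := by
    intro x
    constructor
    · intro hx
      have h' : (⟨e, Subgroup.mem_zpowers e⟩ : Subgroup.zpowers e) • x = x := hx _
      have h'' : e x = x := h'
      have := congrArg Subtype.val h''
      simpa [he] using this
    · intro hx
      rintro ⟨h, hh⟩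
      obtain ⟨k, hk⟩ := Subgroup.mem_zpowers_iff.mp hh
      have hfix : Function.IsFixedPt e x := Subtype.ext hx
      have := hfix.perm_zpow k
      show h • x = x
      rw [← hk]
      exact this
  have h2 : Nat.card (fixedPoints (Subgroup.zpowers e) {x // x ∈ W}) =
      Nat.card {x : F27 // x ∈ W ∧ g x = x} := by
    apply Nat.card_congr
    refine ⟨fun x => ⟨x.1.1, x.1.2, (key x.1).mp x.2⟩,
      fun y => ⟨⟨y.1, y.2.1⟩, (key _).mpr y.2.2⟩,
      fun x => by ext; rfl, fun y => by ext; rfl⟩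
  rwa [h1, h2] at hcong

/-- `G₃₅₁` acts freely on the 17-element subsets of `F₂₇`: if `g ∈ G₃₅₁` maps a
17-element finset `W` onto itself, then `g` is the identity. -/
theorem statement2 (G : Subgroup (Equiv.Perm F27))
    (hG : (G : Set (Equiv.Perm F27)) = affineSet) :
    ∀ g ∈ G, ∀ W : Finset F27, W.card = 17 →
      W.map (Equiv.toEmbedding g) = W → g = 1 := by
  classical
  haveI hf3 : Fact (Nat.Prime 3) := ⟨by norm_num⟩
  intro g hg W hWcard hWmap
  have hg' : g ∈ affineSet := by rw [← hG]; exact hg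
  obtain ⟨a, b, ⟨ha0, c, hac⟩, hgab⟩ := hg'
  have hmem : ∀ x, x ∈ W ↔ g x ∈ W := by
    intro x
    constructor
    · intro hx
      rw [← hWmap]
      exact Finset.mem_map_of_mem _ hx
    · intro hx
      rw [← hWmap] at hx
      obtain ⟨y, hy, hxy⟩ := Finset.mem_map.mp hx
      have : y = x := g.injective (by simpa using hxy)
      rwa [← this]
  by_contra hne
  by_cases ha1 : a = 1
  · -- translation case: g x = x + b with b ≠ 0
    have hb : b ≠ 0 := by
      intro hb0
      apply hne
      ext x
      simp [hgab x, ha1, hb0]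
    have h3 : (3 : F27) = 0 := by
      have := CharP.cast_eq_zero F27 3
      exact_mod_cast this
    have hg3 : g ^ 3 = 1 := by
      ext x
      have h : (g ^ 3) x = g (g (g x)) := by
        simp [pow_succ, Equiv.Perm.mul_apply]
      rw [h, hgab, hgab, hgab, ha1]
      simp only [one_mul, Equiv.Perm.one_apply]
      linear_combination b * h3
    have hcong := key_count 3 (by norm_num) g W hmem hg3
    haveI : IsEmpty {x : F27 // x ∈ W ∧ g x = x} := by
      refine ⟨fun x => ?_⟩
      have hx := x.2.2
      rw [hgab x.1, ha1, one_mul] at hx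
      exact hb (by linear_combination hx)
    rw [hWcard, Nat.card_of_isEmpty] at hcong
    simp [Nat.ModEq] at hcong
  · -- case a ≠ 1, a has order 13
    have hc0 : c ≠ 0 := by
      intro h
      rw [h] at hac
      simp at hac
      exact ha0 hac
    haveI : Fintype F27 := Fintype.ofFinite F27
    have hcardF : Fintype.card F27 = 27 := by
      have := GaloisField.card 3 3 (by norm_num)
      rwa [Nat.card_eq_fintype_card] at this
    have hc26 : c ^ 26 = 1 := by
      have := FiniteField.pow_card_sub_one_eq_one c hc0
      rwa [hcardF] at this
    have ha13 : a ^ 13 = 1 := by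
      rw [hac, ← pow_mul]
      norm_num [hc26]
    have h1a : (1 : F27) - a ≠ 0 := sub_ne_zero.mpr (fun h => ha1 h.symm)
    set x₀ : F27 := b / (1 - a) with hx₀def
    have hx₀ : (1 - a) * x₀ = b := by
      rw [hx₀def]
      field_simp
    have step : ∀ x : F27, g x - x₀ = a * (x - x₀) := by
      intro x
      rw [hgab]
      linear_combination -hx₀
    have iter : ∀ (n : ℕ) (x : F27), (g ^ n) x - x₀ = a ^ n * (x - x₀) := by
      intro n
      induction n with
      | zero => intro x; simp
      | succ n ih =>
        intro x
        rw [pow_succ, Equiv.Perm.mul_apply, ih (g x), step x, pow_succ]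
        ring
    have hg13 : g ^ 13 = 1 := by
      ext x
      have h := iter 13 x
      rw [ha13, one_mul] at h
      have : (g ^ 13) x = x := by linear_combination h
      simpa using this
    have hcong := key_count 13 (by norm_num) g W hmem hg13
    have hle : Nat.card {x : F27 // x ∈ W ∧ g x = x} ≤ 1 := by
      rw [Finite.card_le_one_iff_subsingleton]
      refine ⟨fun x y => ?_⟩
      have hx' := x.2.2
      have hy' := y.2.2
      rw [hgab] at hx' hy'
      have hz : (a - 1) * (x.1 - y.1) = 0 := by linear_combination hx' - hy'
      rcases mul_eq_zero.mp hz with h | h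
      · exact absurd (by linear_combination h) ha1
      · exact Subtype.ext (by linear_combination h)
    rw [hWcard] at hcong
    have h17 : 17 % 13 = Nat.card {x : F27 // x ∈ W ∧ g x = x} % 13 := hcong
    omega
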